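/- Let P : E → B be a split discrete 2-fibration with splitting φ. For every 2-cell α : f ⟹ g between morphisms f, g : B → C of B, the assignment sending X ∈ E_C to the unique vertical morphism α*_X : f*X → g*X satisfying φ(g,X) ∘ α*_X = α_!(φ(f,X)) defines a natural transformation α* : f* ⟹ g* between the transition functors f*, g* : E_C → E_B. -/
import Mathlib


open CategoryTheory Bicategory

universe w₁ v₁ u₁ w₂ v₂ u₂

namespace Paper

/-- A strict 2-functor between strict 2-categories. -/
structure TwoFunctor (K : Type u₁) (L : Type u₂) [Bicategory.{w₁, v₁} K]
    [Bicategory.{w₂, v₂} L] where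
  obj : K → L
  map : ∀ {a b : K}, (a ⟶ b) → (obj a ⟶ obj b)
  map₂ : ∀ {a b : K} {f g : a ⟶ b}, (f ⟶ g) → (map f ⟶ map g)
  map_id : ∀ a : K, map (𝟙 a) = 𝟙 (obj a)
  map_comp : ∀ {a b c : K} (f : a ⟶ b) (g : b ⟶ c), map (f ≫ g) = map f ≫ map g
  map₂_id : ∀ {a b : K} (f : a ⟶ b), map₂ (𝟙 f) = 𝟙 (map f)
  map₂_comp : ∀ {a b : K} {f g h : a ⟶ b} (η : f ⟶ g) (θ : g ⟶ h),
    map₂ (η ≫ θ) = map₂ η ≫ map₂ θ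
  map₂_whiskerLeft : ∀ {a b c : K} (f : a ⟶ b) {g g' : b ⟶ c} (η : g ⟶ g'),
    map₂ (f ◁ η) = eqToHom (map_comp f g) ≫ (map f ◁ map₂ η) ≫ eqToHom (map_comp f g').symm
  map₂_whiskerRight : ∀ {a b c : K} {f f' : a ⟶ b} (η : f ⟶ f') (g : b ⟶ c),
    map₂ (η ▷ g) = eqToHom (map_comp f g) ≫ (map₂ η ▷ map g) ≫ eqToHom (map_comp f' g).symm

variable {E : Type u₁} {B : Type u₂} [Bicategory.{w₁, v₁} E] [Bicategory.{w₂, v₂} B]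
  [Bicategory.Strict E] [Bicategory.Strict B]

/-- A 1-cell is cartesian for the underlying functor of `P` if morphisms into its codomain
factor uniquely through it over a given base factorization. -/
def IsCartesian1 (P : TwoFunctor E B) {a x : E} (g : a ⟶ x) : Prop :=
  ∀ ⦃c : E⦄ (h : c ⟶ x) (u : P.obj c ⟶ P.obj a), P.map h = u ≫ P.map g →
    ∃! w : c ⟶ a, P.map w = u ∧ w ≫ g = h

/-- A splitting of the underlying functor of `P`: chosen cartesian 1-cell lifts, strictly
compatible with identities and composition. -/
structure Cleavage (P : TwoFunctor E B) where
  pullOb : ∀ {x : E} {b : B}, (b ⟶ P.obj x) → E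
  pullHom : ∀ {x : E} {b : B} (f : b ⟶ P.obj x), pullOb f ⟶ x
  pullOb_over : ∀ {x : E} {b : B} (f : b ⟶ P.obj x), P.obj (pullOb f) = b
  pullHom_over : ∀ {x : E} {b : B} (f : b ⟶ P.obj x),
    P.map (pullHom f) = eqToHom (pullOb_over f) ≫ f
  cartesian : ∀ {x : E} {b : B} (f : b ⟶ P.obj x), IsCartesian1 P (pullHom f)
  pullOb_id : ∀ x : E, pullOb (𝟙 (P.obj x)) = x
  pullHom_id : ∀ x : E, HEq (pullHom (𝟙 (P.obj x))) (𝟙 x)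
  pullOb_comp : ∀ {x : E} {b c : B} (g : c ⟶ P.obj x) (f : b ⟶ c),
    pullOb (f ≫ g) = pullOb (f ≫ eqToHom (pullOb_over g).symm : b ⟶ P.obj (pullOb g))
  pullHom_comp : ∀ {x : E} {b c : B} (g : c ⟶ P.obj x) (f : b ⟶ c),
    HEq (pullHom (f ≫ g))
      (pullHom (f ≫ eqToHom (pullOb_over g).symm : b ⟶ P.obj (pullOb g)) ≫ pullHom g)


/-- A 2-cell lift with prescribed source (domain), lying over a 2-cell of the base. -/
structure OpLift2 (P : TwoFunctor E B) {x y : E} (f : x ⟶ y) {ψ : P.obj x ⟶ P.obj y}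
    (β : P.map f ⟶ ψ) where
  g : x ⟶ y
  cell : f ⟶ g
  g_over : P.map g = ψ
  cell_over : P.map₂ cell = β ≫ eqToHom g_over.symm

/-- `P` is locally a discrete opfibration: every 2-cell of the base with source the image of
a 1-cell `f` has a unique lift with source `f`. -/
def IsLocallyDiscreteOpfibration (P : TwoFunctor E B) : Prop :=
  ∀ {x y : E} (f : x ⟶ y) {ψ : P.obj x ⟶ P.obj y} (β : P.map f ⟶ ψ),
    ∃! _l : OpLift2 P f β, True


lemma heqWL {a b c : B} (h : a = b) {p q : b ⟶ c} (η : p ⟶ q) :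
    HEq (eqToHom h ◁ η) η := by
  subst h
  simp [Bicategory.id_whiskerLeft, Bicategory.Strict.leftUnitor_eqToIso]

lemma heqWR {a b c : B} {p q : a ⟶ b} (η : p ⟶ q) (h : b = c) :
    HEq (η ▷ eqToHom h) η := by
  subst h
  simp [Bicategory.whiskerRight_id, Bicategory.Strict.rightUnitor_eqToIso]

lemma heqWL' {a b c : B} {r : a ⟶ b} {h : a = b} (hr : r = eqToHom h) {p q : b ⟶ c}
    (η : p ⟶ q) : HEq (r ◁ η) η := by
  subst hr; exact heqWL h η

lemma heqWR' {a b c : B} {p q : a ⟶ b} (η : p ⟶ q) {r : b ⟶ c} {h : b = c}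
    (hr : r = eqToHom h) : HEq (η ▷ r) η := by
  subst hr; exact heqWR η h

lemma map₂_eqToHom' (P : TwoFunctor E B) {a b : E} {f g : a ⟶ b} (h : f = g) :
    P.map₂ (eqToHom h) = eqToHom (congrArg P.map h) := by
  subst h
  simp [P.map₂_id]

/-- let `P` be a split discrete 2-fibration with splitting `C`.  For a 2-cell
`α : f ⟹ g` between `f, g : b ⟶ c`, the assignment sending an object `X` of the fiber over
`c` to the unique vertical morphism `α*_X : f*X ⟶ g*X` with
`α*_X ≫ φ(g,X) = α_!(φ(f,X))` is natural: for every vertical `u : X ⟶ Y` in the fiber it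
satisfies `α*_X ≫ g*(u) = f*(u) ≫ α*_Y`, where `f*(u)`, `g*(u)` are the transition morphisms
determined by the cartesian lifts. -/
theorem transition_two_cell_natural (P : TwoFunctor E B) (C : Cleavage P)
    (hloc : IsLocallyDiscreteOpfibration P)
    {b c : B} {f g : b ⟶ c} (α : f ⟶ g)
    {X Y : E} (hX : P.obj X = c) (hY : P.obj Y = c)
    (u : X ⟶ Y) (hu : P.map u = eqToHom (hX.trans hY.symm))
    -- the targets `α_!(φ(f,X))` and `α_!(φ(f,Y))` of the unique opcartesian 2-cell lifts of
    -- `α` with sources the chosen cartesian lifts `φ(f,X)` and `φ(f,Y)`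
    (lX : OpLift2 P (C.pullHom (f ≫ eqToHom hX.symm))
      (eqToHom (C.pullHom_over (f ≫ eqToHom hX.symm)) ≫
        (eqToHom (C.pullOb_over (f ≫ eqToHom hX.symm)) ◁ (α ▷ eqToHom hX.symm))))
    (lY : OpLift2 P (C.pullHom (f ≫ eqToHom hY.symm))
      (eqToHom (C.pullHom_over (f ≫ eqToHom hY.symm)) ≫
        (eqToHom (C.pullOb_over (f ≫ eqToHom hY.symm)) ◁ (α ▷ eqToHom hY.symm))))
    -- the components `α*_X` and `α*_Y`: vertical morphisms factoring the above lifts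
    -- through the chosen cartesian lifts `φ(g,X)`, `φ(g,Y)`
    (aX : C.pullOb (f ≫ eqToHom hX.symm) ⟶ C.pullOb (g ≫ eqToHom hX.symm))
    (haX : P.map aX =
      eqToHom ((C.pullOb_over (f ≫ eqToHom hX.symm)).trans
        (C.pullOb_over (g ≫ eqToHom hX.symm)).symm))
    (haX2 : aX ≫ C.pullHom (g ≫ eqToHom hX.symm) = lX.g)
    (aY : C.pullOb (f ≫ eqToHom hY.symm) ⟶ C.pullOb (g ≫ eqToHom hY.symm))
    (haY : P.map aY =
      eqToHom ((C.pullOb_over (f ≫ eqToHom hY.symm)).trans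
        (C.pullOb_over (g ≫ eqToHom hY.symm)).symm))
    (haY2 : aY ≫ C.pullHom (g ≫ eqToHom hY.symm) = lY.g)
    -- the transition morphisms `f*(u)` and `g*(u)`
    (fu : C.pullOb (f ≫ eqToHom hX.symm) ⟶ C.pullOb (f ≫ eqToHom hY.symm))
    (hfu : P.map fu =
      eqToHom ((C.pullOb_over (f ≫ eqToHom hX.symm)).trans
        (C.pullOb_over (f ≫ eqToHom hY.symm)).symm))
    (hfu2 : fu ≫ C.pullHom (f ≫ eqToHom hY.symm) = C.pullHom (f ≫ eqToHom hX.symm) ≫ u)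
    (gu : C.pullOb (g ≫ eqToHom hX.symm) ⟶ C.pullOb (g ≫ eqToHom hY.symm))
    (hgu : P.map gu =
      eqToHom ((C.pullOb_over (g ≫ eqToHom hX.symm)).trans
        (C.pullOb_over (g ≫ eqToHom hY.symm)).symm))
    (hgu2 : gu ≫ C.pullHom (g ≫ eqToHom hY.symm) = C.pullHom (g ≫ eqToHom hX.symm) ≫ u) :
    aX ≫ gu = fu ≫ aY := by
  -- Step 1: show `lX.g ≫ u = fu ≫ lY.g` using the local discrete opfibration property.
  have hψ1 : P.map (lX.g ≫ u) =
      eqToHom (C.pullOb_over (f ≫ eqToHom hX.symm)) ≫ (g ≫ eqToHom hY.symm) := by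
    rw [P.map_comp, lX.g_over, hu]
    simp
  have hψ2 : P.map (fu ≫ lY.g) =
      eqToHom (C.pullOb_over (f ≫ eqToHom hX.symm)) ≫ (g ≫ eqToHom hY.symm) := by
    rw [P.map_comp, hfu, lY.g_over]
    simp
  have hL : HEq ((P.map₂ (lX.cell ▷ u) ≫ eqToHom hψ1) ≫ eqToHom hψ2.symm) α := by
    rw [P.map₂_whiskerRight, lX.cell_over]
    simp only [Bicategory.comp_whiskerRight, Bicategory.eqToHom_whiskerRight,
      Category.assoc, eqToHom_trans]
    exact (eqToHom_comp_heq _ _).trans ((eqToHom_comp_heq _ _).trans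
      ((comp_eqToHom_heq _ _).trans
        (((heqWR' _ hu).trans (heqWL _ _)).trans (heqWR _ _))))
  have hR : HEq (P.map₂ (eqToHom hfu2.symm ≫ (fu ◁ lY.cell))) α := by
    rw [P.map₂_comp, map₂_eqToHom', P.map₂_whiskerLeft, lY.cell_over]
    simp only [Bicategory.whiskerLeft_comp, Bicategory.whiskerLeft_eqToHom,
      Category.assoc, eqToHom_trans]
    exact (eqToHom_comp_heq _ _).trans ((eqToHom_comp_heq _ _).trans
      ((eqToHom_comp_heq _ _).trans ((comp_eqToHom_heq _ _).trans
        (((heqWL' hfu _).trans (heqWL _ _)).trans (heqWR _ _)))))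
  have key : P.map₂ (eqToHom hfu2.symm ≫ (fu ◁ lY.cell)) =
      (P.map₂ (lX.cell ▷ u) ≫ eqToHom hψ1) ≫ eqToHom hψ2.symm :=
    eq_of_heq (hR.trans hL.symm)
  obtain ⟨l0, -, hl0⟩ := hloc (C.pullHom (f ≫ eqToHom hX.symm) ≫ u)
    (P.map₂ (lX.cell ▷ u) ≫ eqToHom hψ1)
  have hl1 : (⟨lX.g ≫ u, lX.cell ▷ u, hψ1, by simp⟩ :
      OpLift2 P (C.pullHom (f ≫ eqToHom hX.symm) ≫ u)
        (P.map₂ (lX.cell ▷ u) ≫ eqToHom hψ1)) = l0 := hl0 _ trivial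
  have hl2 : (⟨fu ≫ lY.g, eqToHom hfu2.symm ≫ (fu ◁ lY.cell), hψ2, key⟩ :
      OpLift2 P (C.pullHom (f ≫ eqToHom hX.symm) ≫ u)
        (P.map₂ (lX.cell ▷ u) ≫ eqToHom hψ1)) = l0 := hl0 _ trivial
  have hg : lX.g ≫ u = fu ≫ lY.g := congrArg OpLift2.g (hl1.trans hl2.symm)
  -- Step 2: cartesian uniqueness.
  have hfact : P.map (lX.g ≫ u) =
      eqToHom ((C.pullOb_over (f ≫ eqToHom hX.symm)).trans
        (C.pullOb_over (g ≫ eqToHom hY.symm)).symm) ≫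
        P.map (C.pullHom (g ≫ eqToHom hY.symm)) := by
    rw [hψ1, C.pullHom_over]
    simp
  obtain ⟨w, -, hw⟩ := C.cartesian (g ≫ eqToHom hY.symm) (lX.g ≫ u) _ hfact
  have e1 : aX ≫ gu = w := hw _ ⟨by rw [P.map_comp, haX, hgu]; simp,
    by rw [Category.assoc, hgu2, ← Category.assoc, haX2]⟩
  have e2 : fu ≫ aY = w := hw _ ⟨by rw [P.map_comp, hfu, haY]; simp,
    by rw [Category.assoc, haY2, ← hg]⟩
  exact e1.trans e2.symm


end Paper
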